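/- Let ε ∈ (0, e^{−1}), a ∈ [0,1], b ∈ [0,1], j ≥ 0 an integer, K a positive integer with K > 1000·ν⁶ where ν := (j+1)·log(K/ε), and s an integer with 0 ≤ s ≤ j. Assume ⌈a⌉ < ⌊a + 2bK⌋. Then ∑_{m=s}^{j} |w_{s,m,a,b,K}| ≤ (e/√(2b)) · (1 + 1/(2bK))^j · ∑_{g=0}^{j} (j/(2bK))^g. -/

import Mathlib

open scoped BigOperators

/-- The coefficients `w_{s,m,a,b,K}` of the theta algorithm. -/
noncomputable def wcoef (s m K : ℕ) (a b : ℝ) : ℂ :=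
  ((⌊a + 2 * b * K⌋ : ℤ) : ℂ) ^ s *
    ((m.factorial : ℂ) * ((Real.sqrt (2 * Real.pi) : ℝ) : ℂ) *
        Complex.exp (Complex.I * (Real.pi : ℂ) / 4) *
        Complex.exp (3 * (Real.pi : ℂ) * Complex.I * ((m - s : ℕ) : ℂ) / 4) *
        Complex.exp (-(Complex.I) * (Real.pi : ℂ) * (a : ℂ) ^ 2 / (2 * (b : ℂ)))) /
      (((Real.sqrt 2 : ℝ) : ℂ) ^ m * (s.factorial : ℂ) *
        (((2 * Real.sqrt (Real.pi * b)) : ℝ) : ℂ) ^ (m + 1) * (K : ℂ) ^ m) *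
    (((Real.sqrt (2 * Real.pi / b) : ℝ) : ℂ)) ^ s *
    ∑ l ∈ Finset.range (m - s + 1),
      (if (m - s - l) % 2 = 0 then (1 : ℂ) else 0) * (-1 : ℂ) ^ ((m + l - s) / 2) /
          ((l.factorial : ℂ) * (((m - s - l) / 2).factorial : ℂ)) *
        ((a : ℂ) * Complex.exp (-(3 * (Real.pi : ℂ) * Complex.I) / 4) *
          ((Real.sqrt (2 * Real.pi / b) : ℝ) : ℂ)) ^ l

lemma norm_wcoef_le (s m K : ℕ) (a b : ℝ) (ha : 0 ≤ a) :
    ‖wcoef s m K a b‖ ≤ |((⌊a + 2*b*K⌋ : ℤ) : ℝ)| ^ s *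
      ((m.factorial : ℝ) * Real.sqrt (2*Real.pi)) /
      (Real.sqrt 2 ^ m * (s.factorial : ℝ) * (2*Real.sqrt (Real.pi*b))^(m+1) * (K:ℝ)^m) *
      Real.sqrt (2*Real.pi/b) ^ s *
      ∑ l ∈ Finset.range (m-s+1), (if (m-s-l) % 2 = 0 then (1:ℝ) else 0) *
        (a * Real.sqrt (2*Real.pi/b))^l / ((l.factorial : ℝ) * (((m-s-l)/2).factorial : ℝ)) := by
  have habs : ∀ x : ℝ, |Real.sqrt x| = Real.sqrt x := fun x => abs_of_nonneg (Real.sqrt_nonneg x)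
  have e1 : Complex.I * (Real.pi:ℂ) / 4 = ((Real.pi/4 : ℝ) : ℂ) * Complex.I := by
    push_cast; ring
  have e2 : 3 * (Real.pi:ℂ) * Complex.I * ((m - s : ℕ) : ℂ) / 4
      = ((3 * Real.pi * (m - s : ℕ) / 4 : ℝ) : ℂ) * Complex.I := by push_cast; ring
  have e3 : -(Complex.I) * (Real.pi:ℂ) * (a:ℂ)^2 / (2*(b:ℂ))
      = ((-(Real.pi * a^2 / (2*b)) : ℝ) : ℂ) * Complex.I := by push_cast; ring
  have e4 : -(3 * (Real.pi:ℂ) * Complex.I) / 4 = ((-(3*Real.pi/4) : ℝ) : ℂ) * Complex.I := by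
    push_cast; ring
  rw [wcoef, e1, e2, e3, e4, norm_mul]
  have hpre : ‖((⌊a + 2 * b * K⌋ : ℤ) : ℂ) ^ s *
      ((m.factorial : ℂ) * ((Real.sqrt (2 * Real.pi) : ℝ) : ℂ) *
        Complex.exp (((Real.pi/4 : ℝ) : ℂ) * Complex.I) *
        Complex.exp (((3 * Real.pi * (m - s : ℕ) / 4 : ℝ) : ℂ) * Complex.I) *
        Complex.exp (((-(Real.pi * a^2 / (2*b)) : ℝ) : ℂ) * Complex.I)) /
      (((Real.sqrt 2 : ℝ) : ℂ) ^ m * (s.factorial : ℂ) *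
        (((2 * Real.sqrt (Real.pi * b)) : ℝ) : ℂ) ^ (m + 1) * (K : ℂ) ^ m) *
      (((Real.sqrt (2 * Real.pi / b) : ℝ) : ℂ)) ^ s‖
      = |((⌊a + 2*b*K⌋ : ℤ) : ℝ)| ^ s * ((m.factorial : ℝ) * Real.sqrt (2*Real.pi)) /
        (Real.sqrt 2 ^ m * (s.factorial : ℝ) * (2*Real.sqrt (Real.pi*b))^(m+1) * (K:ℝ)^m) *
        Real.sqrt (2*Real.pi/b) ^ s := by
    have h2 : |2 * Real.sqrt (Real.pi * b)| = 2 * Real.sqrt (Real.pi * b) :=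
      abs_of_nonneg (by positivity)
    simp only [norm_mul, norm_div, norm_pow, Complex.norm_exp_ofReal_mul_I,
      Complex.norm_real, Complex.norm_natCast, Complex.norm_intCast, Real.norm_eq_abs,
      abs_two, habs, h2, mul_one, one_mul]
  rw [hpre]
  apply mul_le_mul_of_nonneg_left _ (by positivity)
  refine (norm_sum_le _ _).trans ?_
  apply Finset.sum_le_sum
  intro l hl
  by_cases hev : (m - s - l) % 2 = 0
  · apply le_of_eq
    rw [if_pos hev, if_pos hev]
    simp only [norm_mul, norm_div, norm_pow, norm_one, norm_neg,
      Complex.norm_exp_ofReal_mul_I, Complex.norm_real, Complex.norm_natCast,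
      Real.norm_eq_abs, habs, abs_of_nonneg ha, one_pow, mul_one, one_mul]
    ring
  · rw [if_neg hev, if_neg hev]
    simp

lemma keyE' (s l r : ℕ) (x y z K j : ℝ) (hx : x ≠ 0) (hy : y ≠ 0) (hz : z ≠ 0) (hK : K ≠ 0) :
    (x*y) * (x*y/z)^(s+l) * j^(l+2*r) /
      (x^(s+(l+2*r)) * (x^2*(y*z))^(s+(l+2*r)+1) * K^(s+(l+2*r)))
    = (1/(x*z)) * (1/(x^2*z^2*K))^s * (j/(x^2*z^2*K))^(l+r) * (j/(x^2*x^2*y^2*K))^r := by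
  simp only [div_eq_mul_inv, mul_pow, inv_pow, pow_add, pow_mul, mul_inv, one_mul]
  field_simp
  ring

lemma keyE (s l r : ℕ) (b K j : ℝ) (hb : 0 < b) (hK : 0 < K) :
    Real.sqrt (2*Real.pi) * Real.sqrt (2*Real.pi/b) ^ (s+l) * j^(l+2*r) /
      (Real.sqrt 2 ^ (s+(l+2*r)) * (2*Real.sqrt (Real.pi*b))^(s+(l+2*r)+1) * K^(s+(l+2*r)))
    = (1/Real.sqrt (2*b)) * (1/(2*b*K))^s * (j/(2*b*K))^(l+r) * (j/(2*2*Real.pi*K))^r := by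
  have h2 : Real.sqrt (2*Real.pi) = Real.sqrt 2 * Real.sqrt Real.pi :=
    Real.sqrt_mul (by norm_num) _
  have h3 : Real.sqrt (2*Real.pi/b) = Real.sqrt 2 * Real.sqrt Real.pi / Real.sqrt b := by
    rw [Real.sqrt_div (by positivity) b, h2]
  have h4 : Real.sqrt (Real.pi*b) = Real.sqrt Real.pi * Real.sqrt b :=
    Real.sqrt_mul Real.pi_pos.le _
  have h5 : Real.sqrt (2*b) = Real.sqrt 2 * Real.sqrt b := Real.sqrt_mul (by norm_num) _
  rw [h2, h3, h4, h5]
  have hx := Real.sq_sqrt (show (0:ℝ) ≤ 2 by norm_num)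
  have hy := Real.sq_sqrt Real.pi_pos.le
  have hz := Real.sq_sqrt hb.le
  have hx0 : Real.sqrt 2 ≠ 0 := ne_of_gt (Real.sqrt_pos.2 (by norm_num))
  have hy0 : Real.sqrt Real.pi ≠ 0 := ne_of_gt (Real.sqrt_pos.2 Real.pi_pos)
  have hz0 : Real.sqrt b ≠ 0 := ne_of_gt (Real.sqrt_pos.2 hb)
  set x := Real.sqrt 2 with hxd
  set y := Real.sqrt Real.pi with hyd
  set z := Real.sqrt b with hzd
  rw [show Real.pi = y^2 from hy.symm, show b = z^2 from hz.symm,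
    show (2:ℝ) = x^2 from hx.symm]
  exact keyE' s l r x y z K j hx0 hy0 hz0 (ne_of_gt hK)

lemma factorial_le_aux (s n j : ℕ) (h : s + n ≤ j) :
    ((s+n).factorial : ℝ) ≤ (s.factorial : ℝ) * (j:ℝ)^n := by
  induction n with
  | zero => simp
  | succ n ih =>
    have h' : s + n ≤ j := by omega
    have hj : ((s+n+1 : ℕ):ℝ) ≤ (j:ℝ) := by exact_mod_cast (by omega : s+n+1 ≤ j)
    have heq : ((s+(n+1)).factorial:ℝ) = ((s+n+1:ℕ):ℝ) * ((s+n).factorial:ℝ) := by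
      rw [show s+(n+1) = (s+n)+1 by omega, Nat.factorial_succ]; push_cast; ring
    rw [heq, pow_succ]
    calc ((s+n+1:ℕ):ℝ) * ((s+n).factorial:ℝ) ≤ (j:ℝ) * ((s.factorial:ℝ) * (j:ℝ)^n) :=
      mul_le_mul hj (ih h') (by positivity) (by positivity)
    _ = (s.factorial:ℝ) * ((j:ℝ)^n * (j:ℝ)) := by ring

lemma term_bound (s l r j K : ℕ) (a b : ℝ) (q : ℤ) (hb : 0 < b) (hK0 : 0 < (K:ℝ))
    (ha0 : 0 ≤ a) (ha1 : a ≤ 1)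
    (hqabs : |(q:ℝ)| ≤ 1 + 2*b*(K:ℝ)) (hβ : 1 ≤ 2*b*(K:ℝ))
    (hsj : s + (l + 2*r) ≤ j)
    (hjK : (j:ℝ)/(2*2*Real.pi*(K:ℝ)) ≤ 1/(4000*Real.pi)) :
    |(q:ℝ)|^s * (((s+(l+2*r)).factorial:ℝ) * Real.sqrt (2*Real.pi)) /
        (Real.sqrt 2 ^ (s+(l+2*r)) * (s.factorial:ℝ) *
          (2*Real.sqrt (Real.pi*b))^(s+(l+2*r)+1) * (K:ℝ)^(s+(l+2*r))) *
      Real.sqrt (2*Real.pi/b) ^ s *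
      ((a * Real.sqrt (2*Real.pi/b))^l / ((l.factorial:ℝ) * (r.factorial:ℝ)))
    ≤ 1/Real.sqrt (2*b) * (1 + 1/(2*b*(K:ℝ)))^j *
        ((j:ℝ)/(2*b*(K:ℝ)))^(l+r) * ((1/(4000*Real.pi))^r / (r.factorial:ℝ)) := by
  have hβ0 : 0 < 2*b*(K:ℝ) := by linarith
  have hfac : ((s+(l+2*r)).factorial:ℝ) ≤ (s.factorial:ℝ) * (j:ℝ)^(l+2*r) :=
    factorial_le_aux _ _ _ hsj
  have hS0 : 0 ≤ Real.sqrt (2*Real.pi/b) := Real.sqrt_nonneg _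
  have hsfac : (0:ℝ) < (s.factorial:ℝ) := by exact_mod_cast s.factorial_pos
  have hlfac : (1:ℝ) ≤ (l.factorial:ℝ) := by exact_mod_cast l.factorial_pos
  have hrfac : (0:ℝ) < (r.factorial:ℝ) := by exact_mod_cast r.factorial_pos
  have hD : (0:ℝ) < Real.sqrt 2 ^ (s+(l+2*r)) * (s.factorial:ℝ) *
      (2*Real.sqrt (Real.pi*b))^(s+(l+2*r)+1) * (K:ℝ)^(s+(l+2*r)) := by positivity
  have hF : (0:ℝ) < (l.factorial:ℝ) * (r.factorial:ℝ) :=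
    mul_pos (by exact_mod_cast l.factorial_pos) hrfac
  have h1 : |(q:ℝ)|^s * (((s+(l+2*r)).factorial:ℝ) * Real.sqrt (2*Real.pi))
      ≤ (1+2*b*(K:ℝ))^s * (((s.factorial:ℝ) * (j:ℝ)^(l+2*r)) * Real.sqrt (2*Real.pi)) :=
    mul_le_mul (pow_le_pow_left₀ (abs_nonneg _) hqabs s)
      (mul_le_mul_of_nonneg_right hfac (Real.sqrt_nonneg _)) (by positivity)
      (by positivity)
  have h2 : (a * Real.sqrt (2*Real.pi/b))^l ≤ (Real.sqrt (2*Real.pi/b))^l :=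
    pow_le_pow_left₀ (by positivity) (by nlinarith) l
  have hstepA : |(q:ℝ)|^s * (((s+(l+2*r)).factorial:ℝ) * Real.sqrt (2*Real.pi)) /
        (Real.sqrt 2 ^ (s+(l+2*r)) * (s.factorial:ℝ) *
          (2*Real.sqrt (Real.pi*b))^(s+(l+2*r)+1) * (K:ℝ)^(s+(l+2*r))) *
      Real.sqrt (2*Real.pi/b) ^ s *
      ((a * Real.sqrt (2*Real.pi/b))^l / ((l.factorial:ℝ) * (r.factorial:ℝ)))
      ≤ (1+2*b*(K:ℝ))^s * (((s.factorial:ℝ) * (j:ℝ)^(l+2*r)) * Real.sqrt (2*Real.pi)) /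
        (Real.sqrt 2 ^ (s+(l+2*r)) * (s.factorial:ℝ) *
          (2*Real.sqrt (Real.pi*b))^(s+(l+2*r)+1) * (K:ℝ)^(s+(l+2*r))) *
      Real.sqrt (2*Real.pi/b) ^ s *
      ((Real.sqrt (2*Real.pi/b))^l / ((l.factorial:ℝ) * (r.factorial:ℝ))) :=
    mul_le_mul
      (mul_le_mul (div_le_div_of_nonneg_right h1 hD.le) le_rfl (by positivity)
        (by positivity))
      (div_le_div_of_nonneg_right h2 hF.le) (by positivity) (by positivity)
  refine hstepA.trans ?_
  calc (1+2*b*(K:ℝ))^s * (((s.factorial:ℝ) * (j:ℝ)^(l+2*r)) * Real.sqrt (2*Real.pi)) /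
        (Real.sqrt 2 ^ (s+(l+2*r)) * (s.factorial:ℝ) *
          (2*Real.sqrt (Real.pi*b))^(s+(l+2*r)+1) * (K:ℝ)^(s+(l+2*r))) *
      Real.sqrt (2*Real.pi/b) ^ s *
      ((Real.sqrt (2*Real.pi/b))^l / ((l.factorial:ℝ) * (r.factorial:ℝ)))
     = ((1+2*b*(K:ℝ))^s / ((l.factorial:ℝ)*(r.factorial:ℝ))) *
        (Real.sqrt (2*Real.pi) * Real.sqrt (2*Real.pi/b) ^ (s+l) * (j:ℝ)^(l+2*r) /
          (Real.sqrt 2 ^ (s+(l+2*r)) * (2*Real.sqrt (Real.pi*b))^(s+(l+2*r)+1) *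
            (K:ℝ)^(s+(l+2*r)))) := by
          rw [pow_add (Real.sqrt (2*Real.pi/b))]
          field_simp
  _ = ((1+2*b*(K:ℝ))^s / ((l.factorial:ℝ)*(r.factorial:ℝ))) *
        ((1/Real.sqrt (2*b)) * (1/(2*b*(K:ℝ)))^s * ((j:ℝ)/(2*b*(K:ℝ)))^(l+r) *
          ((j:ℝ)/(2*2*Real.pi*(K:ℝ)))^r) := by
      rw [keyE s l r b (K:ℝ) (j:ℝ) hb hK0]
  _ = 1/Real.sqrt (2*b) * ((1+2*b*(K:ℝ))*(1/(2*b*(K:ℝ))))^s * ((j:ℝ)/(2*b*(K:ℝ)))^(l+r) *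
        (((j:ℝ)/(2*2*Real.pi*(K:ℝ)))^r / ((l.factorial:ℝ)*(r.factorial:ℝ))) := by
      rw [mul_pow]; ring
  _ ≤ 1/Real.sqrt (2*b) * (1 + 1/(2*b*(K:ℝ)))^j *
        ((j:ℝ)/(2*b*(K:ℝ)))^(l+r) * ((1/(4000*Real.pi))^r / (r.factorial:ℝ)) := by
      have hbase : (1+2*b*(K:ℝ))*(1/(2*b*(K:ℝ))) = 1 + 1/(2*b*(K:ℝ)) := by
        field_simp; ring
      rw [hbase]
      gcongr <;>
        first
          | positivity
          | omega
          | exact hjK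
          | exact le_mul_of_one_le_left hrfac.le hlfac
          | exact le_add_of_nonneg_right (by positivity)

lemma sum_le_sum_inj {α β : Type*} [DecidableEq β] (T : Finset α) (U : Finset β) (e : α → β)
    (f : α → ℝ) (f' : β → ℝ)
    (h0 : ∀ y ∈ U, 0 ≤ f' y)
    (hinj : ∀ x ∈ T, ∀ y ∈ T, f x ≠ 0 → f y ≠ 0 → e x = e y → x = y)
    (hmem : ∀ x ∈ T, f x ≠ 0 → e x ∈ U)
    (hle : ∀ x ∈ T, f x ≠ 0 → f x ≤ f' (e x)) :
    ∑ x ∈ T, f x ≤ ∑ y ∈ U, f' y := by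
  classical
  have h1 : ∑ x ∈ T, f x = ∑ x ∈ T.filter (fun x => f x ≠ 0), f x :=
    (Finset.sum_filter_ne_zero T).symm
  rw [h1]
  have h2 : ∑ x ∈ T.filter (fun x => f x ≠ 0), f x
      ≤ ∑ x ∈ T.filter (fun x => f x ≠ 0), f' (e x) := by
    apply Finset.sum_le_sum
    intro x hx
    exact hle x (Finset.mem_filter.1 hx).1 (Finset.mem_filter.1 hx).2
  refine h2.trans ?_
  rw [← Finset.sum_image (f := f') (g := e) ?hinj]
  · apply Finset.sum_le_sum_of_subset_of_nonneg
    · intro y hy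
      obtain ⟨x, hx, rfl⟩ := Finset.mem_image.1 hy
      exact hmem x (Finset.mem_filter.1 hx).1 (Finset.mem_filter.1 hx).2
    · intro y hy _
      exact h0 y hy
  · intro x hx y hy hxy
    exact hinj x (Finset.mem_filter.1 hx).1 y (Finset.mem_filter.1 hy).1
      (Finset.mem_filter.1 hx).2 (Finset.mem_filter.1 hy).2 hxy

noncomputable def auxF (b : ℝ) (K j : ℕ) : ℕ × ℕ → ℝ := fun p =>
  1/Real.sqrt (2*b) * (1 + 1/(2*b*(K:ℝ)))^j * ((j:ℝ)/(2*b*(K:ℝ)))^p.1 *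
    ((1/(4000*Real.pi))^p.2 / (p.2.factorial:ℝ))

noncomputable def auxG (b : ℝ) (K j s m l : ℕ) : ℝ :=
  if (m - s - l) % 2 = 0 then auxF b K j (l + (m-s-l)/2, (m-s-l)/2) else 0

/-- Bound on the coefficient sums `∑_{m=s}^{j} |w_{s,m,a,b,K}|`. -/
theorem wcoef_sum_bound (ε : ℝ) (hε : ε ∈ Set.Ioo 0 (Real.exp (-1)))
    (a b : ℝ) (ha : a ∈ Set.Icc (0 : ℝ) 1) (hb : b ∈ Set.Icc (0 : ℝ) 1)
    (j K : ℕ) (hK : 0 < K)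
    (hKbig : 1000 * (((j : ℝ) + 1) * Real.log ((K : ℝ) / ε)) ^ 6 < (K : ℝ))
    (s : ℕ) (hs : s ≤ j)
    (hpq : (⌈a⌉ : ℤ) < ⌊a + 2 * b * K⌋) :
    ∑ m ∈ Finset.Icc s j, ‖wcoef s m K a b‖ ≤
      (Real.exp 1 / Real.sqrt (2 * b)) * (1 + 1 / (2 * b * K)) ^ j *
        ∑ g ∈ Finset.range (j + 1), ((j : ℝ) / (2 * b * K)) ^ g := by
  obtain ⟨ha0, ha1⟩ := ha
  have hK0 : (0:ℝ) < (K:ℝ) := by exact_mod_cast hK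
  have hfloor_le : ((⌊a + 2*b*(K:ℝ)⌋ : ℤ) : ℝ) ≤ a + 2*b*(K:ℝ) := Int.floor_le _
  have hceil : a ≤ ((⌈a⌉ : ℤ) : ℝ) := Int.le_ceil a
  have hint : (⌈a⌉ : ℤ) + 1 ≤ ⌊a + 2*b*(K:ℝ)⌋ := hpq
  have hintR : ((⌈a⌉ : ℤ) : ℝ) + 1 ≤ ((⌊a + 2*b*(K:ℝ)⌋ : ℤ) : ℝ) := by exact_mod_cast hint
  have hβ1 : 1 ≤ 2*b*(K:ℝ) := by linarith
  have hb0 : 0 < b := by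
    by_contra h
    push_neg at h
    nlinarith
  have hceil0 : (0:ℤ) ≤ ⌈a⌉ := Int.ceil_nonneg ha0
  have hq0 : (0:ℝ) ≤ ((⌊a + 2*b*(K:ℝ)⌋ : ℤ) : ℝ) := by
    have : (0:ℝ) ≤ ((⌈a⌉ : ℤ) : ℝ) := by exact_mod_cast hceil0
    linarith
  have hqabs : |((⌊a + 2*b*(K:ℝ)⌋ : ℤ) : ℝ)| ≤ 1 + 2*b*(K:ℝ) := by
    rw [abs_of_nonneg hq0]; linarith
  have hεpos := hε.1
  have hlogε : Real.log ε < -1 := (Real.log_lt_iff_lt_exp hεpos).2 hε.2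
  have hlogK : 0 ≤ Real.log (K:ℝ) := Real.log_nonneg (by exact_mod_cast hK)
  have hlog : 1 ≤ Real.log ((K:ℝ)/ε) := by
    rw [Real.log_div (ne_of_gt hK0) (ne_of_gt hεpos)]
    linarith
  have hj0 : (0:ℝ) ≤ (j:ℝ) := Nat.cast_nonneg j
  have hx1 : (1:ℝ) ≤ ((j:ℝ)+1) * Real.log ((K:ℝ)/ε) := by nlinarith
  have hx2 : ((j:ℝ)+1) ≤ ((j:ℝ)+1) * Real.log ((K:ℝ)/ε) :=
    le_mul_of_one_le_right (by positivity) hlog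
  have hx3 : ((j:ℝ)+1) * Real.log ((K:ℝ)/ε)
      ≤ (((j:ℝ)+1) * Real.log ((K:ℝ)/ε))^6 := le_self_pow₀ hx1 (by norm_num)
  have hKbig' : 1000*((j:ℝ)+1) ≤ (K:ℝ) := by nlinarith
  have hjK : (j:ℝ)/(2*2*Real.pi*(K:ℝ)) ≤ 1/(4000*Real.pi) := by
    rw [div_le_div_iff₀ (by positivity) (by positivity)]
    nlinarith [Real.pi_pos]
  -- step 1 : termwise bound
  have step1 : ∀ m ∈ Finset.Icc s j,
      ‖wcoef s m K a b‖ ≤ ∑ l ∈ Finset.range (m - s + 1), auxG b K j s m l := by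
    intro m hm
    obtain ⟨hsm, hmj⟩ := Finset.mem_Icc.1 hm
    refine (norm_wcoef_le s m K a b ha0).trans ?_
    rw [Finset.mul_sum]
    apply Finset.sum_le_sum
    intro l hl
    have hl' : l ≤ m - s := by
      have := Finset.mem_range.1 hl; omega
    by_cases hev : (m - s - l) % 2 = 0
    · rw [auxG, if_pos hev, if_pos hev]
      set r := (m - s - l)/2 with hrdef
      have hm2 : m = s + (l + 2*r) := by omega
      have hsj' : s + (l + 2*r) ≤ j := by omega
      refine le_trans (le_of_eq ?_) (term_bound s l r j K a b (⌊a + 2*b*(K:ℝ)⌋) hb0 hK0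
        ha0 ha1 hqabs hβ1 hsj' hjK) |>.trans (le_of_eq ?_)
      · rw [hm2]; ring
      · simp only [auxF]
    · rw [auxG, if_neg hev, if_neg hev]
      simp
  refine (Finset.sum_le_sum step1).trans ?_
  rw [Finset.sum_sigma' (Finset.Icc s j) (fun m => Finset.range (m - s + 1))
    (fun m l => auxG b K j s m l)]
  have step2 : ∑ p ∈ (Finset.Icc s j).sigma (fun m => Finset.range (m - s + 1)),
      auxG b K j s p.1 p.2
      ≤ ∑ y ∈ Finset.range (j+1) ×ˢ Finset.range (j+1), auxF b K j y := by
    apply sum_le_sum_inj _ _ (fun p => (p.2 + (p.1 - s - p.2)/2, (p.1 - s - p.2)/2))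
    · intro y _
      have : (0:ℝ) ≤ (y.2.factorial:ℝ) := by positivity
      simp only [auxF]
      positivity
    · rintro ⟨m, l⟩ hx ⟨m', l'⟩ hy hf hf' heq
      simp only [Finset.mem_sigma, Finset.mem_Icc, Finset.mem_range] at hx hy
      obtain ⟨⟨hsm, hmj⟩, hlm⟩ := hx
      obtain ⟨⟨hsm', hmj'⟩, hlm'⟩ := hy
      have hevx : (m - s - l) % 2 = 0 := by
        by_contra h; rw [auxG, if_neg h] at hf; exact hf rfl
      have hevy : (m' - s - l') % 2 = 0 := by
        by_contra h; rw [auxG, if_neg h] at hf'; exact hf' rfl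
      have heq1 : l + (m - s - l)/2 = l' + (m' - s - l')/2 := congrArg Prod.fst heq
      have heq2 : (m - s - l)/2 = (m' - s - l')/2 := congrArg Prod.snd heq
      have : m = m' ∧ l = l' := by omega
      rw [this.1, this.2]
    · rintro ⟨m, l⟩ hx hf
      simp only [Finset.mem_sigma, Finset.mem_Icc, Finset.mem_range] at hx
      obtain ⟨⟨hsm, hmj⟩, hlm⟩ := hx
      simp only [Finset.mem_product, Finset.mem_range]
      omega
    · rintro ⟨m, l⟩ hx hf
      have hev : (m - s - l) % 2 = 0 := by
        by_contra h; rw [auxG, if_neg h] at hf; exact hf rfl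
      rw [auxG, if_pos hev]
  refine step2.trans ?_
  rw [Finset.sum_product]
  have step3 : ∀ gg ∈ Finset.range (j+1),
      ∑ rr ∈ Finset.range (j+1), auxF b K j (gg, rr)
      ≤ (1/Real.sqrt (2*b) * (1 + 1/(2*b*(K:ℝ)))^j * ((j:ℝ)/(2*b*(K:ℝ)))^gg) * Real.exp 1 := by
    intro gg _
    simp only [auxF]
    rw [← Finset.mul_sum]
    apply mul_le_mul_of_nonneg_left _ (by positivity)
    have hc0 : (0:ℝ) ≤ 1/(4000*Real.pi) := by positivity
    refine (Real.sum_le_exp_of_nonneg hc0 (j+1)).trans ?_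
    apply Real.exp_le_exp.2
    rw [div_le_one (by positivity)]
    nlinarith [Real.pi_gt_three]
  refine (Finset.sum_le_sum step3).trans (le_of_eq ?_)
  rw [Finset.mul_sum]
  exact Finset.sum_congr rfl fun x _ => by ring
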